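/- Dyadic covering lemma: for every T > 0, δ ∈ (0,T], and every interval [s,t] ⊆ [0,T] with t − s ≤ δ, the open interval (s,t) can be covered, without covering any points outside [s,t], by dyadic intervals of the form [(i−1)2^{-n}T, i2^{-n}T] with pairwise disjoint interiors, such that for some m ≥ 1 with 2^{-m}T ≤ δ there are at most two dyadic intervals of each length 2^{-i}T for i ≥ m and none of length greater than 2^{-m}T. -/

import Mathlib

/-- The dyadic interval `[(i-1) 2⁻ⁿ T, i 2⁻ⁿ T]` (relative to `T`). -/
noncomputable def dyadicInterval (T : ℝ) (n i : ℕ) : Set ℝ :=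
  Set.Icc (((i : ℝ) - 1) * 2 ^ (-(n : ℤ)) * T) ((i : ℝ) * 2 ^ (-(n : ℤ)) * T)

namespace DyadicCoverAux

lemma encard_le_two_of {α : Type*} (S : Set α)
    (h : ∀ a b c, a ∈ S → b ∈ S → c ∈ S → a = b ∨ a = c ∨ b = c) : S.encard ≤ 2 := by
  by_contra h2
  push_neg at h2
  obtain ⟨a, b, ha, hb, hab⟩ := Set.one_lt_encard_iff.1 (lt_of_le_of_lt one_le_two h2)
  have hpair : ({a, b} : Set α).encard = 2 := Set.encard_pair hab
  have hd : 0 < (S \ {a, b}).encard := by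
    have h3 := Set.tsub_encard_le_encard_diff S {a, b}
    rw [hpair] at h3
    have : (0:ℕ∞) < S.encard - 2 := by
      rw [pos_iff_ne_zero]
      intro hz
      rw [tsub_eq_zero_iff_le] at hz
      exact absurd hz (not_le.2 h2)
    exact lt_of_lt_of_le this h3
  obtain ⟨c, hc⟩ := Set.encard_pos.1 hd
  rcases h a b c ha hb hc.1 with h' | h' | h'
  · exact hab h'
  · exact hc.2 (by simp [h'.symm])
  · exact hc.2 (by simp [h'.symm])

lemma two_zpow_pos' (k : ℤ) : (0:ℝ) < 2 ^ k := zpow_pos two_pos k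

lemma scale_le (T : ℝ) (hT : 0 < T) (n e : ℕ) (a b : ℤ) :
    (a:ℝ) * 2 ^ (-(n:ℤ)) * T ≤ (b:ℝ) * 2 ^ (-((n+e:ℕ):ℤ)) * T ↔ a * 2 ^ e ≤ b := by
  rw [mul_le_mul_iff_of_pos_right hT]
  have hK : (0:ℝ) < 2 ^ ((n+e:ℕ):ℤ) := two_zpow_pos' _
  rw [← mul_le_mul_iff_of_pos_right hK]
  have e1 : (a:ℝ) * 2 ^ (-(n:ℤ)) * 2 ^ ((n+e:ℕ):ℤ) = ((a * 2 ^ e : ℤ) : ℝ) := by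
    rw [mul_assoc, ← zpow_add₀ (two_ne_zero (α := ℝ))]
    push_cast
    rw [show -(n:ℤ) + (n + e) = (e:ℤ) by ring, zpow_natCast]
  have e2 : (b:ℝ) * 2 ^ (-((n+e:ℕ):ℤ)) * 2 ^ ((n+e:ℕ):ℤ) = (b:ℝ) := by
    rw [mul_assoc, ← zpow_add₀ (two_ne_zero (α := ℝ)), neg_add_cancel, zpow_zero, mul_one]
  rw [e1, e2, Int.cast_le]

lemma scale_le' (T : ℝ) (hT : 0 < T) (n e : ℕ) (a b : ℤ) :
    (b:ℝ) * 2 ^ (-((n+e:ℕ):ℤ)) * T ≤ (a:ℝ) * 2 ^ (-(n:ℤ)) * T ↔ b ≤ a * 2 ^ e := by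
  rw [mul_le_mul_iff_of_pos_right hT]
  have hK : (0:ℝ) < 2 ^ ((n+e:ℕ):ℤ) := two_zpow_pos' _
  rw [← mul_le_mul_iff_of_pos_right hK]
  have e1 : (a:ℝ) * 2 ^ (-(n:ℤ)) * 2 ^ ((n+e:ℕ):ℤ) = ((a * 2 ^ e : ℤ) : ℝ) := by
    rw [mul_assoc, ← zpow_add₀ (two_ne_zero (α := ℝ))]
    push_cast
    rw [show -(n:ℤ) + (n + e) = (e:ℤ) by ring, zpow_natCast]
  have e2 : (b:ℝ) * 2 ^ (-((n+e:ℕ):ℤ)) * 2 ^ ((n+e:ℕ):ℤ) = (b:ℝ) := by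
    rw [mul_assoc, ← zpow_add₀ (two_ne_zero (α := ℝ)), neg_add_cancel, zpow_zero, mul_one]
  rw [e1, e2, Int.cast_le]

lemma dyadic_ordered (T : ℝ) (hT : 0 < T) (n i : ℕ) :
    ((i : ℝ) - 1) * 2 ^ (-(n : ℤ)) * T ≤ (i : ℝ) * 2 ^ (-(n : ℤ)) * T := by
  have := two_zpow_pos' (-(n:ℤ))
  nlinarith

lemma dyadic_nested (T : ℝ) (hT : 0 < T) (n e i j : ℕ)
    (h1 : ((i:ℤ) - 1) * 2 ^ e ≤ (j:ℤ) - 1) (h2 : (j:ℤ) ≤ (i:ℤ) * 2 ^ e) :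
    dyadicInterval T (n+e) j ⊆ dyadicInterval T n i := by
  apply Set.Icc_subset_Icc
  · have := (scale_le T hT n e ((i:ℤ)-1) ((j:ℤ)-1)).2 h1
    push_cast at this ⊢
    convert this using 2
  · have := (scale_le' T hT n e (i:ℤ) (j:ℤ)).2 h2
    push_cast at this ⊢
    exact this

lemma dyadic_overlap (T : ℝ) (hT : 0 < T) (n e i j : ℕ)
    (hne : ¬ Disjoint (interior (dyadicInterval T n i)) (interior (dyadicInterval T (n+e) j))) :
    ((i:ℤ) - 1) * 2 ^ e ≤ (j:ℤ) - 1 ∧ (j:ℤ) ≤ (i:ℤ) * 2 ^ e := by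
  rw [Set.not_disjoint_iff] at hne
  obtain ⟨y, hy1, hy2⟩ := hne
  rw [dyadicInterval, interior_Icc] at hy1 hy2
  constructor
  · have : ¬ ((j:ℝ) * 2 ^ (-((n+e:ℕ):ℤ)) * T ≤ ((i:ℝ) - 1) * 2 ^ (-(n:ℤ)) * T) := by
      push_neg
      exact lt_trans hy1.1 hy2.2
    rw [show ((i:ℝ) - 1) = (((i:ℤ) - 1 : ℤ):ℝ) by push_cast; ring,
      show ((j:ℝ)) = (((j:ℤ)):ℝ) by push_cast; ring] at this
    rw [scale_le' T hT n e ((i:ℤ)-1) (j:ℤ)] at this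
    omega
  · have : ¬ ((i:ℝ) * 2 ^ (-(n:ℤ)) * T ≤ ((j:ℝ) - 1) * 2 ^ (-((n+e:ℕ):ℤ)) * T) := by
      push_neg
      exact lt_trans hy2.1 hy1.2
    rw [show ((j:ℝ) - 1) = (((j:ℤ) - 1 : ℤ):ℝ) by push_cast; ring,
      show ((i:ℝ)) = (((i:ℤ)):ℝ) by push_cast; ring] at this
    rw [scale_le T hT n e (i:ℤ) ((j:ℤ)-1)] at this
    omega

lemma le_dy_iff (T : ℝ) (hT : 0 < T) (k : ℕ) (a x : ℝ) :
    a * 2 ^ (-(k:ℤ)) * T ≤ x ↔ a ≤ x * 2 ^ k / T := by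
  have h2 : (0:ℝ) < (2:ℝ) ^ (k:ℕ) := by positivity
  rw [show (2:ℝ) ^ (-(k:ℤ)) = ((2:ℝ) ^ (k:ℕ))⁻¹ by rw [← zpow_natCast (2:ℝ) k, ← zpow_neg],
    show a * ((2:ℝ)^(k:ℕ))⁻¹ * T = a * T / 2^k by ring, div_le_iff₀ h2, le_div_iff₀ hT]

lemma dy_le_iff (T : ℝ) (hT : 0 < T) (k : ℕ) (a x : ℝ) :
    x ≤ a * 2 ^ (-(k:ℤ)) * T ↔ x * 2 ^ k / T ≤ a := by
  have h2 : (0:ℝ) < (2:ℝ) ^ (k:ℕ) := by positivity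
  rw [show (2:ℝ) ^ (-(k:ℤ)) = ((2:ℝ) ^ (k:ℕ))⁻¹ by rw [← zpow_natCast (2:ℝ) k, ← zpow_neg],
    show a * ((2:ℝ)^(k:ℕ))⁻¹ * T = a * T / 2^k by ring, le_div_iff₀ h2, div_le_iff₀ hT]

lemma floor_mem (T : ℝ) (hT : 0 < T) (x : ℝ) (hx0 : 0 ≤ x) (hxT : x < T) (k : ℕ) :
    x ∈ dyadicInterval T k (⌊x * 2 ^ k / T⌋₊ + 1) ∧ ⌊x * 2 ^ k / T⌋₊ + 1 ≤ 2 ^ k := by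
  set y := x * 2 ^ k / T with hy
  have hy0 : 0 ≤ y := by positivity
  refine ⟨⟨?_, ?_⟩, ?_⟩
  · rw [show ((⌊y⌋₊ + 1 : ℕ) : ℝ) - 1 = (⌊y⌋₊ : ℝ) by push_cast; ring, le_dy_iff T hT]
    exact Nat.floor_le hy0
  · rw [dy_le_iff T hT]
    push_cast
    exact (Nat.lt_floor_add_one y).le
  · have : y < 2 ^ k := by
      rw [hy, div_lt_iff₀ hT]
      have h2 : (0:ℝ) < (2:ℝ) ^ k := by positivity
      nlinarith
    have := Nat.floor_lt hy0 |>.2 (by exact_mod_cast this)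
    omega

lemma floor_parent (T : ℝ) (x : ℝ) (k : ℕ) :
    ⌊x * 2 ^ k / T⌋₊ + 1 = ((⌊x * 2 ^ (k+1) / T⌋₊ + 1) + 1) / 2 := by
  have h1 : x * 2 ^ k / T = (x * 2 ^ (k+1) / T) / ((2:ℕ):ℝ) := by
    push_cast; ring
  rw [h1, Nat.floor_div_natCast]
  omega

lemma zpow_succ_level (k : ℕ) : (2:ℝ) ^ (-(k:ℤ)) = 2 * 2 ^ (-((k+1:ℕ):ℤ)) := by
  rw [show -((k+1:ℕ):ℤ) = -(k:ℤ) - 1 by push_cast; ring, zpow_sub₀ (two_ne_zero (α := ℝ))]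
  field_simp

/-- parent interval is contained in `[s,t]` if both children are. -/
lemma parent_sub (T s t : ℝ) (hT : 0 < T) (k c : ℕ) (hc : 1 ≤ c)
    (h1 : dyadicInterval T (k+1) (2*c-1) ⊆ Set.Icc s t)
    (h2 : dyadicInterval T (k+1) (2*c) ⊆ Set.Icc s t) :
    dyadicInterval T k c ⊆ Set.Icc s t := by
  have hcast : ((2*c-1 : ℕ) : ℝ) = 2*(c:ℝ) - 1 := by
    rw [Nat.cast_sub (by omega)]; push_cast; ring
  have eL : ((c:ℝ) - 1) * 2 ^ (-(k:ℤ)) * T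
      = (((2*c-1:ℕ):ℝ) - 1) * 2 ^ (-((k+1:ℕ):ℤ)) * T := by
    rw [hcast, zpow_succ_level]; ring
  have eR : (c:ℝ) * 2 ^ (-(k:ℤ)) * T = ((2*c:ℕ):ℝ) * 2 ^ (-((k+1:ℕ):ℤ)) * T := by
    have h2c : ((2*c:ℕ):ℝ) = 2*(c:ℝ) := by push_cast; ring
    rw [h2c, zpow_succ_level]; ring
  have m1 : (((2*c-1:ℕ):ℝ) - 1) * 2 ^ (-((k+1:ℕ):ℤ)) * T ∈ dyadicInterval T (k+1) (2*c-1) :=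
    Set.left_mem_Icc.2 (dyadic_ordered T hT _ _)
  have m2 : ((2*c:ℕ):ℝ) * 2 ^ (-((k+1:ℕ):ℤ)) * T ∈ dyadicInterval T (k+1) (2*c) :=
    Set.right_mem_Icc.2 (dyadic_ordered T hT _ _)
  have hsL := (h1 m1).1
  have htR := (h2 m2).2
  rw [dyadicInterval, eL, eR]
  exact Set.Icc_subset_Icc hsL htR

/-- interpolation: intermediate intervals at the same level are also inside. -/
lemma interp (T s t : ℝ) (hT : 0 < T) (k j1 j j3 : ℕ) (hl : j1 ≤ j) (hr : j ≤ j3)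
    (h1 : dyadicInterval T k j1 ⊆ Set.Icc s t) (h3 : dyadicInterval T k j3 ⊆ Set.Icc s t) :
    dyadicInterval T k j ⊆ Set.Icc s t := by
  have hpos : (0:ℝ) ≤ 2 ^ (-(k:ℤ)) * T := by positivity
  have m1 : (((j1:ℕ):ℝ) - 1) * 2 ^ (-(k:ℤ)) * T ∈ dyadicInterval T k j1 :=
    Set.left_mem_Icc.2 (dyadic_ordered T hT _ _)
  have m3 : ((j3:ℕ):ℝ) * 2 ^ (-(k:ℤ)) * T ∈ dyadicInterval T k j3 :=
    Set.right_mem_Icc.2 (dyadic_ordered T hT _ _)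
  have hsL := (h1 m1).1
  have htR := (h3 m3).2
  apply Set.Icc_subset_Icc
  · refine le_trans hsL ?_
    have : ((j1:ℝ) - 1) ≤ ((j:ℝ) - 1) := by
      have : (j1:ℝ) ≤ j := by exact_mod_cast hl
      linarith
    calc ((j1:ℝ) - 1) * 2 ^ (-(k:ℤ)) * T = ((j1:ℝ) - 1) * (2 ^ (-(k:ℤ)) * T) := by ring
    _ ≤ ((j:ℝ) - 1) * (2 ^ (-(k:ℤ)) * T) := mul_le_mul_of_nonneg_right this hpos
    _ = ((j:ℝ) - 1) * 2 ^ (-(k:ℤ)) * T := by ring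
  · refine le_trans ?_ htR
    have : (j:ℝ) ≤ (j3:ℝ) := by exact_mod_cast hr
    calc (j:ℝ) * 2 ^ (-(k:ℤ)) * T = (j:ℝ) * (2 ^ (-(k:ℤ)) * T) := by ring
    _ ≤ (j3:ℝ) * (2 ^ (-(k:ℤ)) * T) := mul_le_mul_of_nonneg_right this hpos
    _ = (j3:ℝ) * 2 ^ (-(k:ℤ)) * T := by ring

lemma exists_small (T c : ℝ) (hT : 0 < T) (hc : 0 < c) :
    ∃ n : ℕ, 1 ≤ n ∧ (2:ℝ) ^ (-(n:ℤ)) * T ≤ c := by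
  obtain ⟨n, hn⟩ := exists_pow_lt_of_lt_one (div_pos hc hT) (by norm_num : (1/2:ℝ) < 1)
  refine ⟨max n 1, le_max_right _ _, ?_⟩
  have h1 : (2:ℝ) ^ (-((max n 1 : ℕ):ℤ)) ≤ (2:ℝ) ^ (-(n:ℤ)) := by
    apply zpow_le_zpow_right₀ one_le_two
    have : (n:ℤ) ≤ ((max n 1 : ℕ):ℤ) := by exact_mod_cast le_max_left n 1
    omega
  have h2 : (2:ℝ) ^ (-(n:ℤ)) = (1/2)^n := by
    rw [one_div, inv_pow, ← zpow_natCast (2:ℝ) n, ← zpow_neg]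
  have h3 : (1/2:ℝ)^n * T ≤ c := by
    rw [← div_mul_cancel₀ c (ne_of_gt hT)]
    exact mul_le_mul_of_nonneg_right hn.le hT.le
  calc (2:ℝ) ^ (-((max n 1 : ℕ):ℤ)) * T ≤ (2:ℝ) ^ (-(n:ℤ)) * T :=
        mul_le_mul_of_nonneg_right h1 hT.le
  _ = (1/2:ℝ)^n * T := by rw [h2]
  _ ≤ c := h3

lemma middle_contra (T s t : ℝ) (hT : 0 < T) (k : ℕ) (hk : 2 ≤ k) (j1 j2 j3 : ℕ)
    (h12 : j1 < j2) (h23 : j2 < j3) (h1j : 1 ≤ j1)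
    (hs1 : dyadicInterval T k j1 ⊆ Set.Icc s t)
    (hs3 : dyadicInterval T k j3 ⊆ Set.Icc s t)
    (hmax : ¬ dyadicInterval T (k-1) ((j2+1)/2) ⊆ Set.Icc s t) : False := by
  set c := (j2+1)/2 with hc
  have hc1 : 1 ≤ c := by omega
  have hbounds : j1 ≤ 2*c - 1 ∧ 2*c ≤ j3 := by omega
  have hch1 : dyadicInterval T k (2*c-1) ⊆ Set.Icc s t :=
    interp T s t hT k j1 (2*c-1) j3 hbounds.1 (by omega) hs1 hs3
  have hch2 : dyadicInterval T k (2*c) ⊆ Set.Icc s t :=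
    interp T s t hT k j1 (2*c) j3 (by omega) hbounds.2 hs1 hs3
  apply hmax
  have hk1 : (k-1) + 1 = k := by omega
  have := parent_sub T s t hT (k-1) c hc1 (by rw [hk1]; exact hch1) (by rw [hk1]; exact hch2)
  exact this

end DyadicCoverAux

open DyadicCoverAux in
/-- Dyadic covering lemma: for every `T > 0`, `δ ∈ (0,T]` and interval
`[s,t] ⊆ [0,T]` with `t - s ≤ δ`, the open interval `(s,t)` can be covered, without
covering any points outside `[s,t]`, by dyadic intervals with pairwise disjoint
interiors such that, for some `m ≥ 1` with `2⁻ᵐ T ≤ δ`, all the dyadic intervals used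
have length at most `2⁻ᵐ T` and at most two of them have length `2⁻ⁱ T` for each
`i ≥ m`. -/
theorem dyadic_covering (T δ s t : ℝ) (hT : 0 < T) (hδ0 : 0 < δ) (hδT : δ ≤ T)
    (hs : 0 ≤ s) (hst : s ≤ t) (htT : t ≤ T) (hlen : t - s ≤ δ) :
    ∃ 𝒞 : Set (ℕ × ℕ),
      (∀ p ∈ 𝒞, 1 ≤ p.1 ∧ 1 ≤ p.2 ∧ p.2 ≤ 2 ^ p.1) ∧
      Set.Ioo s t ⊆ ⋃ p ∈ 𝒞, dyadicInterval T p.1 p.2 ∧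
      (⋃ p ∈ 𝒞, dyadicInterval T p.1 p.2) ⊆ Set.Icc s t ∧
      (𝒞.Pairwise fun p q =>
        Disjoint (interior (dyadicInterval T p.1 p.2))
          (interior (dyadicInterval T q.1 q.2))) ∧
      ∃ m : ℕ, 1 ≤ m ∧ 2 ^ (-(m : ℤ)) * T ≤ δ ∧
        (∀ p ∈ 𝒞, m ≤ p.1) ∧
        ∀ i : ℕ, ({p ∈ 𝒞 | p.1 = i} : Set (ℕ × ℕ)).encard ≤ 2 := by
  classical
  set 𝒞 : Set (ℕ × ℕ) := {p | 1 ≤ p.1 ∧ 1 ≤ p.2 ∧ p.2 ≤ 2 ^ p.1 ∧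
      dyadicInterval T p.1 p.2 ⊆ Set.Icc s t ∧
      (p.1 = 1 ∨ ¬ dyadicInterval T (p.1 - 1) ((p.2 + 1) / 2) ⊆ Set.Icc s t)} with h𝒞
  have hmem : ∀ p : ℕ × ℕ, p ∈ 𝒞 ↔ 1 ≤ p.1 ∧ 1 ≤ p.2 ∧ p.2 ≤ 2 ^ p.1 ∧
      dyadicInterval T p.1 p.2 ⊆ Set.Icc s t ∧
      (p.1 = 1 ∨ ¬ dyadicInterval T (p.1 - 1) ((p.2 + 1) / 2) ⊆ Set.Icc s t) := by
    intro p; rw [h𝒞]; rfl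
  -- length of a dyadic interval contained in Icc s t is at most δ
  have hsmall : ∀ p ∈ 𝒞, (2:ℝ) ^ (-(p.1:ℤ)) * T ≤ δ := by
    intro p hp
    obtain ⟨-, -, -, hsub, -⟩ := (hmem p).1 hp
    have mL : (((p.2:ℕ):ℝ) - 1) * 2 ^ (-(p.1:ℤ)) * T ∈ dyadicInterval T p.1 p.2 :=
      Set.left_mem_Icc.2 (dyadic_ordered T hT _ _)
    have mR : ((p.2:ℕ):ℝ) * 2 ^ (-(p.1:ℤ)) * T ∈ dyadicInterval T p.1 p.2 :=
      Set.right_mem_Icc.2 (dyadic_ordered T hT _ _)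
    have h1 := (hsub mL).1
    have h2 := (hsub mR).2
    nlinarith [two_zpow_pos' (-(p.1:ℤ))]
  -- the disjointness key lemma
  have key : ∀ p q : ℕ × ℕ, p ∈ 𝒞 → q ∈ 𝒞 → p.1 ≤ q.1 →
      ¬ Disjoint (interior (dyadicInterval T p.1 p.2))
        (interior (dyadicInterval T q.1 q.2)) → p = q := by
    intro p q hp hq hle hnd
    obtain ⟨e, he⟩ := Nat.exists_eq_add_of_le hle
    obtain ⟨hp1, hp2, hp3, hp4, hp5⟩ := (hmem p).1 hp
    obtain ⟨hq1, hq2, hq3, hq4, hq5⟩ := (hmem q).1 hq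
    rw [he] at hnd
    obtain ⟨h1, h2⟩ := dyadic_overlap T hT p.1 e p.2 q.2 hnd
    rcases Nat.eq_zero_or_pos e with he0 | he1
    · subst he0
      simp only [pow_zero, mul_one] at h1 h2
      have : p.2 = q.2 := by omega
      exact Prod.ext (by omega) this
    · exfalso
      have hq1' : q.1 ≠ 1 := by omega
      rcases hq5 with h | hmax
      · exact hq1' h
      apply hmax
      set c := (q.2 + 1) / 2 with hcdef
      have hcrel : (q.2:ℤ) = 2*(c:ℤ) - 1 ∨ (q.2:ℤ) = 2*(c:ℤ) := by
        have : q.2 = 2*c - 1 ∨ q.2 = 2*c := by omega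
        rcases this with h | h <;> [left; right] <;> omega
      have h2e : (2:ℤ)^e = 2 * 2^(e-1) := by
        conv_lhs => rw [show e = (e-1)+1 by omega]
        rw [pow_succ]; ring
      -- parent of q is contained in the interval of p
      have hpar : dyadicInterval T (p.1 + (e-1)) c ⊆ dyadicInterval T p.1 p.2 := by
        apply dyadic_nested T hT p.1 (e-1) p.2 c
        · -- ((p.2:ℤ)-1) * 2^(e-1) ≤ c - 1
          rw [h2e] at h1
          have hlink : ((p.2:ℤ)-1)*(2*2^(e-1)) = 2*(((p.2:ℤ)-1)*2^(e-1)) := by ring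
          rw [hlink] at h1
          rcases hcrel with h | h <;> omega
        · rw [h2e] at h2
          have hlink : (p.2:ℤ)*(2*2^(e-1)) = 2*((p.2:ℤ)*2^(e-1)) := by ring
          rw [hlink] at h2
          rcases hcrel with h | h <;> omega
      have hlevel : q.1 - 1 = p.1 + (e-1) := by omega
      rw [hlevel]
      exact hpar.trans hp4
  refine ⟨𝒞, ?_, ?_, ?_, ?_, ?_⟩
  · intro p hp
    obtain ⟨h1, h2, h3, -, -⟩ := (hmem p).1 hp
    exact ⟨h1, h2, h3⟩
  · -- covering
    intro x hx
    have hx0 : 0 ≤ x := le_trans hs hx.1.le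
    have hxT : x < T := lt_of_lt_of_le hx.2 htT
    set j : ℕ → ℕ := fun k => ⌊x * 2 ^ k / T⌋₊ + 1 with hjdef
    have hmemk : ∀ k, x ∈ dyadicInterval T k (j k) := fun k => (floor_mem T hT x hx0 hxT k).1
    have hbd : ∀ k, j k ≤ 2 ^ k := fun k => (floor_mem T hT x hx0 hxT k).2
    -- find a good level
    obtain ⟨n, hn1, hn2⟩ := exists_small T (min (x - s) (t - x)) hT
      (lt_min (by linarith [hx.1]) (by linarith [hx.2]))
    have hgood : dyadicInterval T n (j n) ⊆ Set.Icc s t := by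
      have hm := hmemk n
      rw [dyadicInterval, Set.mem_Icc] at hm
      have hlen' : ((j n : ℝ)) * 2 ^ (-(n:ℤ)) * T - ((j n : ℝ) - 1) * 2 ^ (-(n:ℤ)) * T
          = 2 ^ (-(n:ℤ)) * T := by ring
      have h1 : min (x - s) (t - x) ≤ x - s := min_le_left _ _
      have h2 : min (x - s) (t - x) ≤ t - x := min_le_right _ _
      apply Set.Icc_subset_Icc <;> nlinarith
    have hPex : ∃ k, 1 ≤ k ∧ dyadicInterval T k (j k) ⊆ Set.Icc s t := ⟨n, hn1, hgood⟩
    set k0 := Nat.find hPex with hk0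
    obtain ⟨hk01, hk0sub⟩ := Nat.find_spec hPex
    have hin : (k0, j k0) ∈ 𝒞 := by
      rw [hmem]
      refine ⟨hk01, by simp only [hjdef]; omega, hbd k0, hk0sub, ?_⟩
      rcases eq_or_lt_of_le hk01 with h | h
      · exact Or.inl h.symm
      · right
        intro hcon
        have hpar : j (k0 - 1) = (j k0 + 1) / 2 := by
          rw [hjdef]
          simp only
          rw [floor_parent T x (k0-1), show (k0-1)+1 = k0 by omega]
        have := Nat.find_min hPex (m := k0 - 1) (by omega)
        push_neg at this
        exact absurd (by rw [hpar]; exact hcon) (fun hh => (this (by omega) hh).elim)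
    exact Set.mem_biUnion hin (hmemk k0)
  · exact Set.iUnion₂_subset fun p hp => ((hmem p).1 hp).2.2.2.1
  · intro p hp q hq hne
    rcases le_total p.1 q.1 with h | h
    · by_contra hnd
      exact hne (key p q hp hq h hnd)
    · by_contra hnd
      exact hne ((key q p hq hp h (fun hd => hnd hd.symm)).symm)
  · have hmex : ∃ n : ℕ, 1 ≤ n ∧ (2:ℝ) ^ (-(n:ℤ)) * T ≤ δ := exists_small T δ hT hδ0
    set m := Nat.find hmex with hm
    obtain ⟨hm1, hm2⟩ := Nat.find_spec hmex
    refine ⟨m, hm1, hm2, ?_, ?_⟩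
    · intro p hp
      have h1 := ((hmem p).1 hp).1
      have h2 := hsmall p hp
      exact Nat.find_min' hmex ⟨h1, h2⟩
    · intro i
      apply encard_le_two_of
      intro a b c ha hb hc
      by_contra hne
      push_neg at hne
      obtain ⟨hab, hac, hbc⟩ := hne
      obtain ⟨haC, hai⟩ := ha
      obtain ⟨hbC, hbi⟩ := hb
      obtain ⟨hcC, hci⟩ := hc
      obtain ⟨ha1, ha2, ha3, ha4, ha5⟩ := (hmem a).1 haC
      obtain ⟨hb1, hb2, hb3, hb4, hb5⟩ := (hmem b).1 hbC
      obtain ⟨hc1, hc2, hc3, hc4, hc5⟩ := (hmem c).1 hcC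
      have hne2 : a.2 ≠ b.2 ∧ a.2 ≠ c.2 ∧ b.2 ≠ c.2 := by
        refine ⟨?_, ?_, ?_⟩ <;> intro h
        · exact hab (Prod.ext (hai.trans hbi.symm) h)
        · exact hac (Prod.ext (hai.trans hci.symm) h)
        · exact hbc (Prod.ext (hbi.trans hci.symm) h)
      rcases eq_or_lt_of_le (hai ▸ ha1 : 1 ≤ i) with hi1 | hi2
      · -- i = 1 : indices in {1,2}, three distinct impossible
        rw [← hi1] at hai hbi hci
        rw [hai] at ha3; rw [hbi] at hb3; rw [hci] at hc3
        omega
      · -- i ≥ 2 : middle interval's parent is contained, contradiction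
        -- sort a.2 b.2 c.2 and apply middle_contra with the middle element
        have hmc : ∀ y : ℕ × ℕ, y ∈ 𝒞 → y.1 = i → ∀ j1 j3, 1 ≤ j1 → j1 < y.2 → y.2 < j3 →
            dyadicInterval T i j1 ⊆ Set.Icc s t → dyadicInterval T i j3 ⊆ Set.Icc s t →
            False := by
          intro y hy hyi j1 j3 hj1 hlt1 hlt2 hs1 hs3
          obtain ⟨hy1, hy2, hy3, hy4, hy5⟩ := (hmem y).1 hy
          rcases hy5 with h | h
          · omega
          · rw [hyi] at h
            exact middle_contra T s t hT i (by omega) j1 y.2 j3 hlt1 hlt2 hj1 hs1 hs3 h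
        rw [hai] at ha4; rw [hbi] at hb4; rw [hci] at hc4
        rcases Nat.lt_or_ge a.2 b.2 with h1 | h1 <;>
        rcases Nat.lt_or_ge b.2 c.2 with h2 | h2 <;>
        rcases Nat.lt_or_ge a.2 c.2 with h3 | h3
        · exact hmc b hbC hbi a.2 c.2 ha2 h1 h2 ha4 hc4
        · exact hmc b hbC hbi a.2 c.2 ha2 h1 h2 ha4 hc4
        · exact hmc c hcC hci a.2 b.2 ha2 h3 (by omega) ha4 hb4
        · exact hmc a haC hai c.2 b.2 hc2 (by omega) h1 hc4 hb4
        · exact hmc a haC hai b.2 c.2 hb2 (by omega) h3 hb4 hc4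
        · exact hmc c hcC hci b.2 a.2 hb2 h2 (by omega) hb4 ha4
        · exact hmc b hbC hbi c.2 a.2 hc2 (by omega) (by omega) hc4 ha4
        · exact hmc b hbC hbi c.2 a.2 hc2 (by omega) (by omega) hc4 ha4
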